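/- Let F be a field, q ∈ F× of multiplicative order strictly greater than d, let S be a finite set of at most d elements of F×, and let V ⊆ S be such that for every λ ∈ V and every k with 1 ≤ k ≤ i+1 one has q^k λ ∈ S (where 0 ≤ i ≤ d−2). Then the cardinality of V is at most d − 1 − i. -/
import Mathlib


theorem stmt7 (F : Type*) [Field F] (d i : ℕ) (q : Fˣ) (hq : d < orderOf q)
    (hi : i ≤ d - 2) (S : Finset Fˣ) (hS : S.card ≤ d)
    (V : Finset Fˣ) (hVS : V ⊆ S)
    (hV : ∀ lam ∈ V, ∀ k, 1 ≤ k → k ≤ i + 1 → q ^ k * lam ∈ S) :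
    V.card ≤ d - 1 - i := by
  classical
  rcases V.eq_empty_or_nonempty with h | ⟨lam, hlam⟩
  · simp [h]
  set U : ℕ → Finset Fˣ := fun k =>
    (Finset.range (k + 1)).biUnion fun j => V.image fun x => q ^ j * x with hU
  have hmemU : ∀ k j x, j ≤ k → x ∈ V → q ^ j * x ∈ U k := by
    intro k j x hj hx
    simp only [hU, Finset.mem_biUnion, Finset.mem_range, Finset.mem_image]
    exact ⟨j, Nat.lt_succ_of_le hj, x, hx, rfl⟩
  have hVU : ∀ k, V ⊆ U k := by
    intro k x hx
    have := hmemU k 0 x (Nat.zero_le _) hx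
    simpa using this
  have hUS : ∀ k, k ≤ i + 1 → U k ⊆ S := by
    intro k hk y hy
    simp only [hU, Finset.mem_biUnion, Finset.mem_range, Finset.mem_image] at hy
    obtain ⟨j, hj, x, hx, rfl⟩ := hy
    rcases Nat.eq_zero_or_pos j with rfl | hj1
    · simpa using hVS hx
    · exact hV x hx j hj1 (le_trans (Nat.lt_succ_iff.mp hj) hk)
  have hmono : ∀ k, U k ⊆ U (k + 1) := by
    intro k
    apply Finset.biUnion_subset_biUnion_of_subset_left
    exact Finset.range_subset_range.mpr (Nat.le_succ _)
  -- key: no U k with k ≤ i+1 can be stable under multiplication by q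
  have hnostab : ∀ k, k ≤ i + 1 → ¬ (∀ y ∈ U k, q * y ∈ U k) := by
    intro k hk hstab
    have hl0 : q ^ 0 * lam ∈ U k := hmemU k 0 lam (Nat.zero_le _) hlam
    have hall : ∀ n, q ^ n * lam ∈ U k := by
      intro n
      induction n with
      | zero => simpa using hl0
      | succ n ih =>
          have := hstab _ ih
          rwa [← mul_assoc, ← pow_succ'] at this
    have hsub : (Finset.range (d + 1)).image (fun n => q ^ n * lam) ⊆ S := by
      intro y hy
      simp only [Finset.mem_image, Finset.mem_range] at hy
      obtain ⟨n, _, rfl⟩ := hy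
      exact hUS k hk (hall n)
    have hinj : Set.InjOn (fun n => q ^ n * lam) (Finset.range (d + 1)) := by
      intro a ha b hb hab
      simp only [Finset.coe_range, Set.mem_Iio] at ha hb
      have : q ^ a = q ^ b := mul_right_cancel hab
      exact pow_injOn_Iio_orderOf (lt_of_lt_of_le ha (Nat.succ_le_of_lt hq))
        (lt_of_lt_of_le hb (Nat.succ_le_of_lt hq)) this
    have hcard : d + 1 ≤ S.card := by
      calc d + 1 = ((Finset.range (d + 1)).image (fun n => q ^ n * lam)).card := by
            rw [Finset.card_image_of_injOn hinj, Finset.card_range]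
        _ ≤ S.card := Finset.card_le_card hsub
    omega
  -- step: strict growth
  have hstep : ∀ k, k + 1 ≤ i + 1 → (U k).card + 1 ≤ (U (k + 1)).card := by
    intro k hk
    by_contra hc
    push_neg at hc
    have hle : (U (k + 1)).card ≤ (U k).card := by omega
    have heq : U (k + 1) = U k :=
      (Finset.eq_of_subset_of_card_le (hmono k) hle).symm
    apply hnostab k (le_trans (Nat.le_succ k) hk)
    intro y hy
    simp only [hU, Finset.mem_biUnion, Finset.mem_range, Finset.mem_image] at hy
    obtain ⟨j, hj, x, hx, rfl⟩ := hy
    have : q ^ (j + 1) * x ∈ U (k + 1) :=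
      hmemU (k + 1) (j + 1) x (Nat.succ_le_of_lt hj) hx
    rw [heq] at this
    rwa [pow_succ', mul_assoc] at this
  have hgrow : ∀ k, k ≤ i + 1 → V.card + k ≤ (U k).card := by
    intro k
    induction k with
    | zero => intro _; simpa using Finset.card_le_card (hVU 0)
    | succ k ih =>
        intro hk
        have h1 := ih (le_trans (Nat.le_succ k) hk)
        have h2 := hstep k hk
        omega
  have hfin : V.card + (i + 1) ≤ d :=
    le_trans (hgrow (i + 1) le_rfl)
      (le_trans (Finset.card_le_card (hUS (i + 1) le_rfl)) hS)
  omega
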